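/- Let S ∈ ℂ^{L×N} be a matrix with nonzero columns s_1, …, s_N, and let Ŝ ∈ ℂ^{L²×N} be the matrix whose i-th column is conj(s_i) ⊗ s_i. Let K ≥ 1 and δ ≥ 1 be integers with K + δ ≤ N. If the coherence of S satisfies μ(S) < 1/√(K + δ − 1), then every set of K + δ columns of Ŝ is linearly independent; equivalently, spark(Ŝ) > K + δ. -/

import Mathlib

open ComplexConjugate

noncomputable section

/-- Complex inner product `⟨x, y⟩ = Σ_k conj(x_k) y_k`. -/
def cinner {L : ℕ} (x y : Fin L → ℂ) : ℂ := ∑ k, conj (x k) * y k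

/-- Euclidean norm. -/
def cnorm {L : ℕ} (x : Fin L → ℂ) : ℝ := Real.sqrt (∑ k, ‖x k‖ ^ 2)

/-- Coherence of a matrix given by its columns. -/
def coherence {L : ℕ} {ι : Type} (s : ι → Fin L → ℂ) : ℝ :=
  sSup {r : ℝ | ∃ k l : ι, k ≠ l ∧
    r = ‖cinner (s k) (s l)‖ / (cnorm (s k) * cnorm (s l))}

/-- Kronecker product of vectors, `(a ⊗ b)_{iL + j} = a_i b_j`. -/
def kron {L : ℕ} (a b : Fin L → ℂ) : Fin (L * L) → ℂ := fun k =>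
  a ⟨k.val / L, Nat.div_lt_of_lt_mul k.isLt⟩ *
  b ⟨k.val % L, Nat.mod_lt _ (by
      rcases Nat.eq_zero_or_pos L with h | h
      · exact absurd k.isLt (by simp [h])
      · exact h)⟩

lemma sum_kron_index {L : ℕ} (F : Fin L → Fin L → ℂ) :
    ∑ k : Fin (L * L), F ⟨k.val / L, Nat.div_lt_of_lt_mul k.isLt⟩
      ⟨k.val % L, Nat.mod_lt _ (by
        rcases Nat.eq_zero_or_pos L with h | h
        · exact absurd k.isLt (by simp [h])
        · exact h)⟩ = ∑ i : Fin L, ∑ j : Fin L, F i j := by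
  rw [show (∑ i : Fin L, ∑ j : Fin L, F i j) = ∑ p : Fin L × Fin L, F p.1 p.2 from
    (Fintype.sum_prod_type (f := fun p : Fin L × Fin L => F p.1 p.2)).symm]
  rw [← Equiv.sum_comp (finProdFinEquiv (m := L) (n := L)).symm
    (fun p : Fin L × Fin L => F p.1 p.2)]
  apply Fintype.sum_congr
  intro k
  have h1 : ((finProdFinEquiv.symm k).1 : Fin L) = ⟨k.val / L, Nat.div_lt_of_lt_mul k.isLt⟩ := by
    apply Fin.ext; rfl
  have h2 : ((finProdFinEquiv.symm k).2 : Fin L) = ⟨k.val % L, Nat.mod_lt _ (by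
        rcases Nat.eq_zero_or_pos L with h | h
        · exact absurd k.isLt (by simp [h])
        · exact h)⟩ := by
    apply Fin.ext; rfl
  rw [h1, h2]

/-- Inner products of Khatri–Rao columns. -/
lemma cinner_kron {L : ℕ} (a b : Fin L → ℂ) :
    cinner (kron (fun k => conj (a k)) a) (kron (fun k => conj (b k)) b)
      = conj (cinner a b) * cinner a b := by
  unfold cinner kron
  rw [sum_kron_index (fun i j =>
      conj (conj (a i) * a j) * (conj (b i) * b j))]
  have : ∀ i j : Fin L, conj (conj (a i) * a j) * (conj (b i) * b j)
      = (a i * conj (b i)) * (conj (a j) * b j) := by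
    intro i j; simp [map_mul]; ring
  simp only [this]
  rw [← Finset.sum_mul_sum]
  congr 1
  rw [map_sum]
  apply Fintype.sum_congr
  intro i; simp [map_mul]
  try ring

lemma cinner_self_eq {L : ℕ} (a : Fin L → ℂ) :
    cinner a a = ((∑ k, ‖a k‖ ^ 2 : ℝ) : ℂ) := by
  unfold cinner
  push_cast
  apply Fintype.sum_congr
  intro k
  rw [← Complex.normSq_eq_conj_mul_self, Complex.normSq_eq_norm_sq]
  push_cast
  ring


lemma cinner_sum_sum {L : ℕ} {ι : Type*} [Fintype ι] (c : ι → ℂ) (w : ι → Fin L → ℂ) :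
    cinner (∑ i, c i • w i) (∑ j, c j • w j)
      = ∑ i, ∑ j, conj (c i) * c j * cinner (w i) (w j) := by
  unfold cinner
  simp only [Finset.sum_apply, Pi.smul_apply, smul_eq_mul, map_sum, map_mul,
    Finset.sum_mul, Finset.mul_sum]
  rw [Finset.sum_comm]
  conv_rhs => rw [Finset.sum_comm]
  apply Finset.sum_congr rfl
  intro i _
  rw [Finset.sum_comm]
  apply Finset.sum_congr rfl
  intro j _
  apply Finset.sum_congr rfl
  intro k _
  ring

lemma nsq_pos {L : ℕ} {x : Fin L → ℂ} (hx : x ≠ 0) :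
    0 < ∑ k, ‖x k‖ ^ 2 := by
  have h : ∃ k, x k ≠ 0 := by
    by_contra h
    push_neg at h
    exact hx (funext h)
  obtain ⟨k, hk⟩ := h
  have h1 : (0:ℝ) < ‖x k‖ ^ 2 := pow_pos (norm_pos_iff.mpr hk) 2
  calc (0:ℝ) < ‖x k‖ ^ 2 := h1
    _ ≤ ∑ k, ‖x k‖ ^ 2 :=
      Finset.single_le_sum (f := fun i => ‖x i‖ ^ 2)
        (fun i _ => by positivity) (Finset.mem_univ k)

lemma cnorm_sq {L : ℕ} (x : Fin L → ℂ) :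
    cnorm x ^ 2 = ∑ k, ‖x k‖ ^ 2 :=
  Real.sq_sqrt (Finset.sum_nonneg fun i _ => by positivity)

lemma coherence_bddAbove {L N : ℕ} (s : Fin N → Fin L → ℂ) :
    BddAbove {r : ℝ | ∃ k l : Fin N, k ≠ l ∧
      r = ‖cinner (s k) (s l)‖ / (cnorm (s k) * cnorm (s l))} := by
  apply Set.Finite.bddAbove
  apply Set.Finite.subset (Set.finite_range
    (fun p : Fin N × Fin N => ‖cinner (s p.1) (s p.2)‖ / (cnorm (s p.1) * cnorm (s p.2))))
  rintro r ⟨k, l, _, rfl⟩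
  exact ⟨(k, l), rfl⟩

lemma le_coherence {L N : ℕ} (s : Fin N → Fin L → ℂ) {k l : Fin N} (hkl : k ≠ l) :
    ‖cinner (s k) (s l)‖ / (cnorm (s k) * cnorm (s l)) ≤ coherence s :=
  le_csSup (coherence_bddAbove s) ⟨k, l, hkl, rfl⟩

lemma coherence_nonneg {L N : ℕ} (hN : 2 ≤ N) (s : Fin N → Fin L → ℂ) :
    0 ≤ coherence s := by
  have h0 : (⟨0, by omega⟩ : Fin N) ≠ ⟨1, by omega⟩ := by
    intro h
    simpa using congrArg Fin.val h
  refine le_trans ?_ (le_coherence s h0)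
  apply div_nonneg (norm_nonneg _)
  unfold cnorm
  positivity

set_option maxHeartbeats 1000000 in
/-- if `μ(S) < 1/√(K + δ − 1)` then every set of `K + δ` columns of the
Khatri–Rao product `Ŝ` is linearly independent, i.e. `spark(Ŝ) > K + δ`. -/
theorem khatriRao_columns_linearIndependent_of_coherence_lt
    (L N K δ : ℕ) (hK : 1 ≤ K) (hδ : 1 ≤ δ) (hKδ : K + δ ≤ N)
    (s : Fin N → Fin L → ℂ) (hs : ∀ i, s i ≠ 0)
    (hcoh : coherence s < 1 / Real.sqrt ((K : ℝ) + (δ : ℝ) - 1)) :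
    ∀ T : Finset (Fin N), T.card = K + δ →
      LinearIndependent ℂ (fun i : T => kron (fun k => conj (s i.1 k)) (s i.1)) := by
  intro T hT
  rw [Fintype.linearIndependent_iff]
  intro c hc
  -- notation
  set μ := coherence s with hμdef
  set m := K + δ with hm
  have hN : 2 ≤ N := by omega
  have hμ0 : 0 ≤ μ := coherence_nonneg hN s
  -- the key quantity: μ² (m-1) < 1
  have hm1 : (1:ℝ) ≤ (m:ℝ) - 1 := by
    have : (2:ℝ) ≤ (m:ℝ) := by exact_mod_cast (by omega : 2 ≤ m)
    linarith
  have hmK : ((K:ℝ) + (δ:ℝ) - 1) = (m:ℝ) - 1 := by push_cast [hm]; ring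
  rw [hmK] at hcoh
  have hmnn : (0:ℝ) ≤ (m:ℝ) - 1 := by linarith
  have hsq : μ ^ 2 * ((m:ℝ) - 1) < 1 := by
    have hrt : 0 < Real.sqrt ((m:ℝ) - 1) := Real.sqrt_pos.2 (by linarith)
    have h1 : μ * Real.sqrt ((m:ℝ) - 1) < 1 := (lt_div_iff₀ hrt).1 hcoh
    have h2 : (μ * Real.sqrt ((m:ℝ) - 1)) ^ 2 < 1 :=
      pow_lt_one₀ (by positivity) h1 (by norm_num)
    calc μ ^ 2 * ((m:ℝ) - 1) = (μ * Real.sqrt ((m:ℝ) - 1)) ^ 2 := by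
          rw [mul_pow, Real.sq_sqrt hmnn]
      _ < 1 := h2
  -- abbreviations
  set w : T → Fin (L*L) → ℂ := fun i => kron (fun k => conj (s i.1 k)) (s i.1) with hwdef
  set a : T → ℝ := fun i => ‖c i‖ with hadef
  set n : T → ℝ := fun i => ∑ k, ‖s i.1 k‖ ^ 2 with hndef
  set t : T → ℝ := fun i => a i * n i with htdef
  set g : T → T → ℝ := fun i j => ‖cinner (s i.1) (s j.1)‖ with hgdef
  have hn : ∀ i : T, 0 < n i := fun i => nsq_pos (hs i.1)
  have ha0 : ∀ i : T, 0 ≤ a i := fun i => norm_nonneg _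
  have hcn2 : ∀ i : T, cnorm (s i.1) ^ 2 = n i := fun i => cnorm_sq (s i.1)
  have hcnpos : ∀ i : T, 0 < cnorm (s i.1) := by
    intro i
    have h0 : 0 ≤ cnorm (s i.1) := Real.sqrt_nonneg _
    nlinarith [hcn2 i, hn i, h0]
  -- Gram entries
  have hG : ∀ i j : T, cinner (w i) (w j) = ((g i j ^ 2 : ℝ) : ℂ) := by
    intro i j
    rw [hwdef]
    simp only
    rw [cinner_kron, ← Complex.normSq_eq_conj_mul_self, Complex.normSq_eq_norm_sq]
  -- the vanishing Gram quadratic form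
  have hQc : (0:ℂ) = ∑ i, ∑ j, conj (c i) * c j * ((g i j ^ 2 : ℝ) : ℂ) := by
    calc (0:ℂ) = cinner (∑ i, c i • w i) (∑ j, c j • w j) := by
          rw [hc]; simp [cinner]
      _ = ∑ i, ∑ j, conj (c i) * c j * cinner (w i) (w j) := cinner_sum_sum c w
      _ = ∑ i, ∑ j, conj (c i) * c j * ((g i j ^ 2 : ℝ) : ℂ) := by
          refine Finset.sum_congr rfl fun i _ => Finset.sum_congr rfl fun j _ => ?_
          rw [hG]
  have hQ : (0:ℝ) = ∑ i, ∑ j, (conj (c i) * c j).re * g i j ^ 2 := by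
    have h := congrArg Complex.re hQc
    simpa [Complex.mul_re, ← Complex.ofReal_pow, Complex.ofReal_re, Complex.ofReal_im] using h
  -- coherence bound on off-diagonal entries
  have hgle : ∀ i j : T, i ≠ j → g i j ^ 2 ≤ μ ^ 2 * (n i * n j) := by
    intro i j hij
    have hij' : (i : Fin N) ≠ (j : Fin N) := fun h => hij (Subtype.ext h)
    have h1 : g i j / (cnorm (s i.1) * cnorm (s j.1)) ≤ μ := le_coherence s hij'
    have hpos : 0 < cnorm (s i.1) * cnorm (s j.1) := mul_pos (hcnpos i) (hcnpos j)
    have h2 : g i j ≤ μ * (cnorm (s i.1) * cnorm (s j.1)) := by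
      rw [div_le_iff₀ hpos] at h1; linarith
    have hg0 : 0 ≤ g i j := norm_nonneg _
    calc g i j ^ 2 ≤ (μ * (cnorm (s i.1) * cnorm (s j.1))) ^ 2 := by
          apply pow_le_pow_left₀ hg0 h2
      _ = μ ^ 2 * (n i * n j) := by
          rw [mul_pow, mul_pow, hcn2 i, hcn2 j]
  -- off-diagonal term bound
  have hterm : ∀ i j : T, i ≠ j →
      -(μ ^ 2 * (t i * t j)) ≤ (conj (c i) * c j).re * g i j ^ 2 := by
    intro i j hij
    set r : ℝ := (conj (c i) * c j).re with hrdef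
    have h1 : |r| ≤ a i * a j := by
      calc |r| ≤ ‖conj (c i) * c j‖ := Complex.abs_re_le_norm _
        _ = a i * a j := by rw [norm_mul, Complex.norm_conj]
    have h2 : (0:ℝ) ≤ g i j ^ 2 := sq_nonneg _
    have h3 : g i j ^ 2 ≤ μ ^ 2 * (n i * n j) := hgle i j hij
    have h4 : |r| * g i j ^ 2 ≤ (a i * a j) * (μ ^ 2 * (n i * n j)) :=
      mul_le_mul h1 h3 h2 (mul_nonneg (ha0 i) (ha0 j))
    have h5 : -(|r| * g i j ^ 2) ≤ r * g i j ^ 2 := by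
      rw [← neg_mul]
      exact mul_le_mul_of_nonneg_right (neg_abs_le r) h2
    calc -(μ ^ 2 * (t i * t j)) = -((a i * a j) * (μ ^ 2 * (n i * n j))) := by
          simp only [htdef]; ring
      _ ≤ -(|r| * g i j ^ 2) := neg_le_neg h4
      _ ≤ r * g i j ^ 2 := h5
  -- splitting double sums
  have hsplit : ∀ (f : T → T → ℝ), (∑ i, ∑ j, f i j)
      = ∑ i, f i i + ∑ i, ∑ j ∈ Finset.univ.erase i, f i j := by
    intro f
    rw [← Finset.sum_add_distrib]
    exact Finset.sum_congr rfl fun i _ =>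
      (Finset.add_sum_erase _ _ (Finset.mem_univ i)).symm
  have hcard : ((Finset.univ : Finset T).card : ℝ) = (m:ℝ) := by
    rw [Finset.card_univ, Fintype.card_coe, hT]
  -- off-diagonal t-sum bound
  have hoff : ∑ i, ∑ j ∈ Finset.univ.erase i, t i * t j ≤ ((m:ℝ) - 1) * ∑ i, t i ^ 2 := by
    have h2 : ∑ i, ∑ j, t i * t j = (∑ i, t i) ^ 2 := by
      rw [sq, Finset.sum_mul_sum]
    have h1 := hsplit (fun i j => t i * t j)
    have h3 : (∑ i, t i) ^ 2 ≤ ((Finset.univ : Finset T).card : ℝ) * ∑ i, t i ^ 2 :=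
      sq_sum_le_card_mul_sum_sq
    have h4 : ∀ i : T, t i * t i = t i ^ 2 := fun i => (sq (t i)).symm
    simp only [h4] at h1
    rw [hcard] at h3
    nlinarith [h1, h2, h3]
  -- diagonal sum
  have hdiag : ∑ i, (conj (c i) * c i).re * g i i ^ 2 = ∑ i, t i ^ 2 := by
    refine Finset.sum_congr rfl fun i _ => ?_
    have h1 : (conj (c i) * c i).re = a i ^ 2 := by
      rw [← Complex.normSq_eq_conj_mul_self, Complex.ofReal_re, Complex.normSq_eq_norm_sq]
    have h2 : g i i = n i := by
      simp only [hgdef]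
      rw [cinner_self_eq, Complex.norm_real, Real.norm_eq_abs, abs_of_nonneg (le_of_lt (nsq_pos (hs i.1)))]
    rw [h1, h2]
    simp only [htdef]
    ring
  -- off-diagonal Gram sum bound
  have hoffb : -(μ ^ 2 * ∑ i, ∑ j ∈ Finset.univ.erase i, t i * t j)
      ≤ ∑ i, ∑ j ∈ Finset.univ.erase i, (conj (c i) * c j).re * g i j ^ 2 := by
    rw [Finset.mul_sum, ← Finset.sum_neg_distrib]
    refine Finset.sum_le_sum fun i _ => ?_
    rw [Finset.mul_sum, ← Finset.sum_neg_distrib]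
    refine Finset.sum_le_sum fun j hj => ?_
    exact hterm i j (Finset.ne_of_mem_erase hj).symm
  -- put it all together
  have hmain : ∑ i, t i ^ 2 ≤ μ ^ 2 * (((m:ℝ) - 1) * ∑ i, t i ^ 2) := by
    have h1 := hsplit (fun i j => (conj (c i) * c j).re * g i j ^ 2)
    rw [h1, hdiag] at hQ
    have h2 : μ ^ 2 * (∑ i, ∑ j ∈ Finset.univ.erase i, t i * t j)
        ≤ μ ^ 2 * (((m:ℝ) - 1) * ∑ i, t i ^ 2) :=
      mul_le_mul_of_nonneg_left hoff (sq_nonneg μ)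
    linarith [hQ, hoffb, h2]
  have hts : ∑ i, t i ^ 2 = 0 := by
    have hge : (0:ℝ) ≤ ∑ i, t i ^ 2 := Finset.sum_nonneg fun i _ => sq_nonneg _
    have hle : ∑ i, t i ^ 2 ≤ 0 := by nlinarith [hmain, hsq, hge]
    linarith
  intro i
  have hti : t i ^ 2 = 0 :=
    (Finset.sum_eq_zero_iff_of_nonneg fun j _ => sq_nonneg (t j)).1 hts i (Finset.mem_univ i)
  have ht0 : t i = 0 := by
    have := sq_nonneg (t i); nlinarith
  have ha : a i = 0 := by
    have h1 : a i * n i = 0 := ht0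
    rcases mul_eq_zero.1 h1 with h | h
    · exact h
    · exact absurd h (ne_of_gt (hn i))
  have : ‖c i‖ = 0 := ha
  exact norm_eq_zero.1 this


end
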